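/- For any positive integer j and any graph G, α_j(G) ≤ max{k ∈ ℤ | Σ_{i=1}^k d_i + C(χ_j(G)−1, 2) − k(j−1)/2 ≤ m(G)}. -/

import Mathlib

open Finset

namespace DSI

variable {V : Type*} (G : SimpleGraph V) [Fintype V] [DecidableEq V] [DecidableRel G.Adj]

/-- The degree sequence of `G`, sorted in non-decreasing order. -/
def dseq : List ℕ := (Finset.univ.val.map (fun v => G.degree v)).sort (· ≤ ·)

/-- The sum of the `k` smallest degrees, `Σ_{i=1}^k d_i`. -/
def sumSmallest (k : ℕ) : ℕ := ((dseq G).take k).sum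

/-- The sum of the `k` largest degrees, `Σ_{i=1}^k d_{n-i+1}`. -/
def sumLargest (k : ℕ) : ℕ := ((dseq G).reverse.take k).sum

/-- The number of edges `m(G)`. -/
def esize : ℕ := G.edgeFinset.card

/-- `m[S]`: the number of edges of the subgraph induced by `S`. -/
def mOn (S : Finset V) : ℕ := (S.sym2.filter (fun e => e ∈ G.edgeSet)).card

/-- A set `I` is `j`-independent if every vertex of `I` has fewer than `j` neighbours in `I`,
i.e. the induced subgraph has maximum degree `< j`. -/
def JIndep (j : ℕ) (I : Finset V) : Prop := ∀ v ∈ I, (I.filter (G.Adj v)).card < j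

/-- The `j`-independence number `α_j(G)`. -/
noncomputable def alphaJ (j : ℕ) : ℕ := sSup {k | ∃ I : Finset V, JIndep G j I ∧ I.card = k}

/-- The family `F` of maximum `j`-independent sets. -/
noncomputable def maxJIndep (j : ℕ) : Set (Finset V) :=
  {S | JIndep G j S ∧ S.card = alphaJ G j}

/-- `max_{S ∈ F} (m[V−S] − m[S])`. -/
noncomputable def fU (j : ℕ) : ℤ :=
  sSup ((fun S : Finset V => (mOn G Sᶜ : ℤ) - (mOn G S : ℤ)) '' maxJIndep G j)

/-- `min_{S ∈ F} (m[V−S] − m[S])`. -/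
noncomputable def fL (j : ℕ) : ℤ :=
  sInf ((fun S : Finset V => (mOn G Sᶜ : ℤ) - (mOn G S : ℤ)) '' maxJIndep G j)

/-- The upper `j`-annihilation number `a_j(G)`. -/
noncomputable def aJ (j : ℕ) : ℕ :=
  sSup {k | k ≤ Fintype.card V ∧ (sumSmallest G k : ℤ) + fU G j ≤ (esize G : ℤ)}

/-- The lower `j`-annihilation number `c_j(G)`. -/
noncomputable def cJ (j : ℕ) : ℕ :=
  sInf {k | k ≤ Fintype.card V ∧ (esize G : ℤ) ≤ (sumLargest G k : ℤ) + fL G j}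

/-- The annihilation number `a(G)`. -/
noncomputable def annihilation : ℕ :=
  sSup {k | k ≤ Fintype.card V ∧ sumSmallest G k ≤ esize G}

/-- An independent set. -/
def IndepSet (I : Finset V) : Prop := ∀ v ∈ I, ∀ w ∈ I, ¬ G.Adj v w

/-- The independence number `α(G)`. -/
noncomputable def alpha : ℕ := sSup {k | ∃ I : Finset V, IndepSet G I ∧ I.card = k}

end DSI
/-- The `j`-chromatic number `χ_j(G)`: the fewest number of `j`-independent sets that
the vertex set can be partitioned into (as colour classes of a colouring). -/
noncomputable def DSI.chiJ {V : Type*} (G : SimpleGraph V) [Fintype V]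
    [DecidableEq V] [DecidableRel G.Adj] (j : ℕ) : ℕ :=
  sInf {t | ∃ f : V → Fin t, ∀ c : Fin t,
    DSI.JIndep G j (Finset.univ.filter (fun v => f v = c))}

section Helpers

open DSI

variable {V : Type*} (G : SimpleGraph V) [Fintype V] [DecidableEq V] [DecidableRel G.Adj]

lemma sorted_take_sum_le : ∀ {t l : List ℕ}, t.Sublist l → l.Pairwise (· ≤ ·) →
    (l.take t.length).sum ≤ t.sum := by
  intro t l h
  induction h with
  | slnil => simp
  | @cons t' l' a h ih =>
    intro hs
    have hs' : l'.Pairwise (· ≤ ·) := hs.of_cons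
    rcases t' with _ | ⟨b, tb⟩
    · simp
    · have hn : (b :: tb).length - 1 < l'.length := by
        have := h.length_le; simp at this ⊢; omega
      have hx : ((a :: l').take (b::tb).length).sum
          = a + (l'.take ((b::tb).length - 1)).sum := by
        simp [List.take_succ_cons]
      have key : (l'.take (b::tb).length).sum
          = (l'.take ((b::tb).length - 1)).sum + l'.get ⟨(b::tb).length - 1, hn⟩ := by
        have := List.sum_take_succ l' ((b::tb).length - 1) hn
        simp at this ⊢
        omega
      have hael : a ≤ l'.get ⟨(b::tb).length - 1, hn⟩ := by
        rcases List.pairwise_cons.mp hs with ⟨h1, -⟩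
        exact h1 _ (List.get_mem _ _)
      calc ((a :: l').take (b::tb).length).sum
          = a + (l'.take ((b::tb).length - 1)).sum := hx
        _ ≤ (l'.take (b::tb).length).sum := by omega
        _ ≤ (b :: tb).sum := ih hs'
  | @cons_cons t' l' a h ih =>
    intro hs
    have := ih hs.of_cons
    simpa using Nat.add_le_add_left this a

lemma sumSmallest_le (I : Finset V) :
    sumSmallest G I.card ≤ ∑ v ∈ I, G.degree v := by
  classical
  set t₀ : List ℕ := (I.val.map (fun v => G.degree v)).sort (· ≤ ·) with ht₀
  have hlen : t₀.length = I.card := by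
    rw [ht₀, Multiset.length_sort, Multiset.card_map]
    rfl
  have hsub : t₀.Sublist (dseq G) := by
    apply List.sublist_of_subperm_of_pairwise _ (Multiset.pairwise_sort _ _)
      (Multiset.pairwise_sort _ _)
    rw [← Multiset.coe_le, Multiset.sort_eq, Multiset.sort_eq]
    exact Multiset.map_le_map (by exact Finset.val_le_iff.mpr (Finset.subset_univ I))
  have hsum : t₀.sum = ∑ v ∈ I, G.degree v := by
    rw [ht₀]
    rw [show ((I.val.map (fun v => G.degree v)).sort (· ≤ ·)).sum
      = ((I.val.map (fun v => G.degree v)).sort (· ≤ ·) : Multiset ℕ).sum from rfl]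
    rw [Multiset.sort_eq]
    rfl
  calc sumSmallest G I.card = ((dseq G).take t₀.length).sum := by rw [hlen]; rfl
    _ ≤ t₀.sum := sorted_take_sum_le hsub (Multiset.pairwise_sort _ _)
    _ = _ := hsum

lemma adjPairs_eq_sum (I A : Finset V) :
    ((I ×ˢ A).filter fun p => G.Adj p.1 p.2).card
      = ∑ v ∈ I, (A.filter (G.Adj v)).card := by
  classical
  rw [Finset.card_eq_sum_card_fiberwise (f := Prod.fst) (t := I)
    (fun p hp => by simp only [Finset.mem_coe, mem_filter, mem_product] at hp; exact hp.1.1)]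
  refine Finset.sum_congr rfl fun v hv => ?_
  have himg : ((I ×ˢ A).filter fun p => G.Adj p.1 p.2).filter (fun p => p.1 = v)
      = (A.filter (G.Adj v)).image (fun y => (v, y)) := by
    ext ⟨x, y⟩
    simp only [mem_filter, mem_product, mem_image]
    constructor
    · rintro ⟨⟨⟨-, hy⟩, hadj⟩, rfl⟩
      exact ⟨y, ⟨hy, hadj⟩, rfl⟩
    · rintro ⟨z, ⟨hz, hadj⟩, heq⟩
      obtain ⟨rfl, rfl⟩ := Prod.mk.injEq .. ▸ And.intro (congrArg Prod.fst heq) (congrArg Prod.snd heq)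
      exact ⟨⟨⟨hv, hz⟩, hadj⟩, rfl⟩
  rw [himg, Finset.card_image_of_injective _ (fun a b hab => (Prod.mk.injEq _ _ _ _ ▸ hab).2)]

lemma sum_degree_eq (I : Finset V) :
    ∑ v ∈ I, G.degree v = ((I ×ˢ I).filter fun p => G.Adj p.1 p.2).card
      + ((I ×ˢ Iᶜ).filter fun p => G.Adj p.1 p.2).card := by
  classical
  rw [adjPairs_eq_sum, adjPairs_eq_sum]
  rw [← Finset.sum_add_distrib]
  refine Finset.sum_congr rfl fun v hv => ?_
  rw [SimpleGraph.degree, SimpleGraph.neighborFinset_eq_filter]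
  rw [← Finset.card_union_of_disjoint (Finset.disjoint_filter_filter
    (disjoint_compl_right)), ← Finset.filter_union, Finset.union_compl]

lemma two_mul_mOn (S : Finset V) :
    ((S ×ˢ S).filter fun p => G.Adj p.1 p.2).card = 2 * mOn G S := by
  classical
  rw [Finset.card_eq_sum_card_fiberwise
    (f := fun p : V × V => Sym2.mk p.1 p.2) (t := S.sym2.filter (fun e => e ∈ G.edgeSet)) ?_]
  · rw [mOn, Finset.sum_congr rfl ?_, Finset.sum_const, smul_eq_mul, mul_comm]
    intro e he
    simp only [mem_filter] at he
    obtain ⟨heS, heE⟩ := he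
    induction e with
    | _ a b =>
      have hadj : G.Adj a b := heE
      have hab : a ≠ b := G.ne_of_adj hadj
      have haS : a ∈ S ∧ b ∈ S := Finset.mk_mem_sym2_iff.mp heS
      have : ((S ×ˢ S).filter fun p => G.Adj p.1 p.2).filter
          (fun p => Sym2.mk p.1 p.2 = s(a, b)) = {(a, b), (b, a)} := by
        ext ⟨x, y⟩
        simp only [mem_filter, mem_product, mem_insert, mem_singleton, Prod.mk.injEq,
          Sym2.eq_iff]
        constructor
        · rintro ⟨-, (⟨rfl, rfl⟩ | ⟨rfl, rfl⟩)⟩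
          · exact Or.inl ⟨rfl, rfl⟩
          · exact Or.inr ⟨rfl, rfl⟩
        · rintro (⟨rfl, rfl⟩ | ⟨rfl, rfl⟩)
          · exact ⟨⟨⟨haS.1, haS.2⟩, hadj⟩, Or.inl ⟨rfl, rfl⟩⟩
          · exact ⟨⟨⟨haS.2, haS.1⟩, hadj.symm⟩, Or.inr ⟨rfl, rfl⟩⟩
      rw [this]
      rw [Finset.card_insert_of_notMem (by simp [hab]), Finset.card_singleton]
  · intro p hp
    obtain ⟨a, b⟩ := p
    simp only [Finset.mem_coe, mem_filter, mem_product] at hp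
    simp only [Finset.mem_coe, mem_filter, Finset.mk_mem_sym2_iff]
    exact ⟨⟨hp.1.1, hp.1.2⟩, hp.2⟩

lemma mOn_eq_filter (S : Finset V) :
    mOn G S = (G.edgeFinset.filter (fun e => e ∈ S.sym2)).card := by
  classical
  rw [mOn]
  congr 1
  ext e
  simp only [mem_filter, SimpleGraph.mem_edgeFinset, SimpleGraph.mem_edgeSet]
  constructor
  · rintro ⟨h1, h2⟩; exact ⟨h2, h1⟩
  · rintro ⟨h1, h2⟩; exact ⟨h2, h1⟩

lemma cross_card (I : Finset V) :
    (G.edgeFinset.filter (fun e => ¬ e ∈ I.sym2 ∧ ¬ e ∈ Iᶜ.sym2)).card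
      = ((I ×ˢ Iᶜ).filter fun p => G.Adj p.1 p.2).card := by
  classical
  symm
  apply Finset.card_bij (i := fun p _ => Sym2.mk p.1 p.2)
  · rintro ⟨v, w⟩ hp
    simp only [mem_filter, mem_product, mem_compl] at hp
    obtain ⟨⟨hv, hw⟩, hadj⟩ := hp
    simp only [mem_filter, SimpleGraph.mem_edgeFinset, SimpleGraph.mem_edgeSet,
      Finset.mk_mem_sym2_iff, mem_compl]
    refine ⟨hadj, ?_, ?_⟩
    · rintro ⟨-, h2⟩; exact hw h2
    · rintro ⟨h1, -⟩; exact h1 hv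
  · rintro ⟨v, w⟩ hp ⟨v', w'⟩ hp' heq
    simp only [mem_filter, mem_product, mem_compl] at hp hp'
    simp only [Sym2.eq_iff] at heq
    rcases heq with ⟨rfl, rfl⟩ | ⟨rfl, rfl⟩
    · rfl
    · exact absurd hp'.1.1 hp.1.2
  · intro e he
    induction e with
    | _ a b =>
      simp only [mem_filter, SimpleGraph.mem_edgeFinset, SimpleGraph.mem_edgeSet,
        Finset.mk_mem_sym2_iff, mem_compl, not_and, not_not] at he
      obtain ⟨hadj, h1, h2⟩ := he
      by_cases ha : a ∈ I
      · have hb : b ∉ I := fun hb => h1 ha hb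
        exact ⟨(a, b), by simp [mem_filter, mem_product, mem_compl, ha, hb, hadj], rfl⟩
      · have hb : b ∈ I := h2 ha
        refine ⟨(b, a), by simp [mem_filter, mem_product, mem_compl, ha, hb, hadj.symm], ?_⟩
        exact Sym2.eq_swap

lemma esize_split (I : Finset V) :
    esize G = mOn G I + mOn G Iᶜ + ((I ×ˢ Iᶜ).filter fun p => G.Adj p.1 p.2).card := by
  classical
  rw [← cross_card, mOn_eq_filter, mOn_eq_filter]
  have h1 := Finset.card_filter_add_card_filter_not
    (s := G.edgeFinset) (p := fun e => e ∈ I.sym2)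
  have h2 := Finset.card_filter_add_card_filter_not
    (s := G.edgeFinset.filter (fun e => ¬ e ∈ I.sym2)) (p := fun e => e ∈ Iᶜ.sym2)
  rw [Finset.filter_filter, Finset.filter_filter] at h2
  have h3 : (G.edgeFinset.filter (fun e => ¬ e ∈ I.sym2 ∧ e ∈ Iᶜ.sym2))
      = G.edgeFinset.filter (fun e => e ∈ Iᶜ.sym2) := by
    apply Finset.filter_congr
    intro e he
    simp only [SimpleGraph.mem_edgeFinset, SimpleGraph.mem_edgeSet] at he
    induction e with
    | _ a b =>
      simp only [Finset.mk_mem_sym2_iff, mem_compl, iff_iff_implies_and_implies]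
      constructor
      · rintro ⟨-, h⟩; exact h
      · rintro ⟨ha, hb⟩
        exact ⟨fun h => ha h.1, ha, hb⟩
  rw [h3] at h2
  rw [esize]
  omega

lemma jindep_union {j : ℕ} {A B : Finset V} (hA : JIndep G j A) (hB : JIndep G j B)
    (hAB : ∀ v ∈ A, ∀ w ∈ B, ¬ G.Adj v w) : JIndep G j (A ∪ B) := by
  intro v hv
  rw [Finset.filter_union]
  by_cases hvA : v ∈ A
  · have hBe : B.filter (G.Adj v) = ∅ := by
      rw [Finset.filter_eq_empty_iff]
      intro w hw hadj
      exact hAB v hvA w hw hadj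
    calc ((A.filter (G.Adj v)) ∪ (B.filter (G.Adj v))).card
        = (A.filter (G.Adj v)).card := by rw [hBe, Finset.union_empty]
      _ < j := hA v hvA
  · have hvB : v ∈ B := by
      rcases Finset.mem_union.mp hv with h | h
      · exact absurd h hvA
      · exact h
    have hAe : A.filter (G.Adj v) = ∅ := by
      rw [Finset.filter_eq_empty_iff]
      intro w hw hadj
      exact hAB w hw v hvB hadj.symm
    calc ((A.filter (G.Adj v)) ∪ (B.filter (G.Adj v))).card
        = (B.filter (G.Adj v)).card := by rw [hAe, Finset.empty_union]
      _ < j := hB v hvB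

lemma merge_coloring {j k : ℕ} {I : Finset V} (f : V → Fin (k+1))
    (hf : ∀ c, JIndep G j (Iᶜ.filter (fun v => f v = c)))
    {c d : Fin (k+1)} (hcd : c ≠ d)
    (hno : ∀ v ∈ Iᶜ, ∀ w ∈ Iᶜ, f v = c → f w = d → ¬ G.Adj v w) :
    ∃ g : V → Fin k, ∀ e : Fin k, JIndep G j (Iᶜ.filter (fun v => g v = e)) := by
  classical
  obtain ⟨i₀, hi₀⟩ := Fin.exists_succAbove_eq hcd
  refine ⟨fun v => if h : f v = d then i₀
    else Classical.choose (Fin.exists_succAbove_eq h), ?_⟩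
  set g : V → Fin k := fun v => if h : f v = d then i₀
    else Classical.choose (Fin.exists_succAbove_eq h) with hg
  have hgspec : ∀ v (h : f v ≠ d), d.succAbove (g v) = f v := by
    intro v h
    rw [hg]
    simp only [dif_neg h]
    exact Classical.choose_spec (Fin.exists_succAbove_eq h)
  have hclass : ∀ e : Fin k, Iᶜ.filter (fun v => g v = e) =
      if e = i₀ then Iᶜ.filter (fun v => f v = c) ∪ Iᶜ.filter (fun v => f v = d)
      else Iᶜ.filter (fun v => f v = d.succAbove e) := by
    intro e
    ext v
    by_cases he : e = i₀
    · subst he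
      rw [if_pos rfl]
      simp only [Finset.mem_union, Finset.mem_filter]
      constructor
      · rintro ⟨hv, hgv⟩
        by_cases hfv : f v = d
        · exact Or.inr ⟨hv, hfv⟩
        · left
          refine ⟨hv, ?_⟩
          rw [← hi₀, ← hgv]
          exact (hgspec v hfv).symm
      · rintro (⟨hv, hfv⟩ | ⟨hv, hfv⟩)
        · refine ⟨hv, ?_⟩
          have hfvd : f v ≠ d := by rw [hfv]; exact hcd
          have := hgspec v hfvd
          rw [hfv, ← hi₀] at this
          exact Fin.succAbove_right_injective this
        · refine ⟨hv, ?_⟩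
          rw [hg]; simp [hfv]
    · rw [if_neg he]
      simp only [Finset.mem_filter]
      constructor
      · rintro ⟨hv, hgv⟩
        refine ⟨hv, ?_⟩
        have hfv : f v ≠ d := by
          intro hfv
          rw [hg] at hgv; simp [hfv] at hgv; exact he hgv.symm
        rw [← hgspec v hfv, hgv]
      · rintro ⟨hv, hfv⟩
        have hfvd : f v ≠ d := by rw [hfv]; exact Fin.succAbove_ne d e
        refine ⟨hv, ?_⟩
        have := hgspec v hfvd
        rw [hfv] at this
        exact Fin.succAbove_right_injective this
  intro e
  rw [hclass e]
  by_cases he : e = i₀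
  · rw [if_pos he]
    refine jindep_union G (hf c) (hf d) ?_
    intro v hv w hw
    simp only [Finset.mem_filter] at hv hw
    exact hno v hv.1 w hw.1 hv.2 hw.2
  · rw [if_neg he]
    exact hf _
lemma no_cross_merge {j k : ℕ} {I : Finset V} (f : V → Fin (k+1))
    (hf : ∀ c, JIndep G j (Iᶜ.filter (fun v => f v = c)))
    (hmin : ∀ g : V → Fin k, ¬ (∀ e : Fin k, JIndep G j (Iᶜ.filter (fun v => g v = e))))
    {c d : Fin (k+1)} (hcd : c ≠ d) :
    ∃ v ∈ Iᶜ, ∃ w ∈ Iᶜ, f v = c ∧ f w = d ∧ G.Adj v w := by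
  by_contra h
  push_neg at h
  obtain ⟨g, hg⟩ := merge_coloring G f hf hcd (by
    intro v hv w hw hvc hwd
    exact h v hv w hw hvc hwd)
  exact hmin g hg
lemma choose_two_le_mOn_compl (j : ℕ) (hj : 1 ≤ j) (I : Finset V) (hI : JIndep G j I) :
    (DSI.chiJ G j - 1).choose 2 ≤ mOn G Iᶜ := by
  classical
  by_cases hV : Nonempty V
  swap
  · have : DSI.chiJ G j = 0 := by
      apply Nat.le_antisymm _ (Nat.zero_le _)
      apply Nat.sInf_le
      exact ⟨fun v => (hV ⟨v⟩).elim, fun c v hv => ((hV ⟨v⟩).elim : _)⟩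
    simp [this]
  set Cset : Set ℕ := {s | ∃ f : V → Fin s, ∀ c : Fin s,
    JIndep G j (Iᶜ.filter (fun v => f v = c))} with hCset
  have hne : Cset.Nonempty := by
    refine ⟨Fintype.card V, fun v => Fintype.equivFin V v, ?_⟩
    intro c v hv
    have : ((Iᶜ.filter (fun w => Fintype.equivFin V w = c)).filter (G.Adj v)) = ∅ := by
      rw [Finset.filter_eq_empty_iff]
      intro w hw hadj
      simp only [Finset.mem_filter] at hv hw
      have : w = v := (Fintype.equivFin V).injective (by rw [hv.2, hw.2])
      subst this
      exact G.irrefl hadj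
    rw [this]
    simpa using (show 0 < j from hj)
  have hmem := Nat.sInf_mem hne
  have h0 : sInf Cset ≠ 0 := by
    intro h0
    rw [h0] at hmem
    obtain ⟨f, -⟩ := hmem
    exact (f (Classical.arbitrary V)).elim0
  obtain ⟨k, hk⟩ : ∃ k, sInf Cset = k + 1 := ⟨sInf Cset - 1, by omega⟩
  rw [hk] at hmem
  obtain ⟨f, hf⟩ := hmem
  have hmin : ∀ g : V → Fin k, ¬ (∀ e : Fin k,
      JIndep G j (Iᶜ.filter (fun v => g v = e))) := by
    intro g hg
    have : k ∈ Cset := ⟨g, hg⟩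
    have := Nat.sInf_le this
    omega
  -- Claim 1 : DSI.chiJ G j ≤ k + 2
  have hchi : DSI.chiJ G j ≤ k + 2 := by
    apply Nat.sInf_le
    refine ⟨fun v => if v ∈ I then Fin.last (k+1) else (f v).castSucc, ?_⟩
    intro c
    by_cases hc : c = Fin.last (k+1)
    · subst hc
      have : Finset.univ.filter (fun v =>
          (if v ∈ I then Fin.last (k+1) else (f v).castSucc) = Fin.last (k+1)) = I := by
        ext v
        simp only [Finset.mem_filter, Finset.mem_univ, true_and]
        by_cases hvI : v ∈ I
        · simp [hvI]
        · simp only [if_neg hvI]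
          constructor
          · intro hcast
            exact absurd hcast (Fin.castSucc_lt_last _).ne
          · intro h; exact absurd h hvI
      rw [this]
      exact hI
    · obtain ⟨d, rfl⟩ := (Fin.eq_castSucc_or_eq_last c).resolve_right hc
      have : Finset.univ.filter (fun v =>
          (if v ∈ I then Fin.last (k+1) else (f v).castSucc) = d.castSucc)
          = Iᶜ.filter (fun v => f v = d) := by
        ext v
        simp only [Finset.mem_filter, Finset.mem_univ, true_and, Finset.mem_compl]
        by_cases hvI : v ∈ I
        · simp only [if_pos hvI]
          constructor
          · intro hcast
            exact absurd hcast.symm (Fin.castSucc_lt_last _).ne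
          · rintro ⟨h, -⟩; exact absurd hvI h
        · simp only [if_neg hvI, Fin.castSucc_inj]
          exact ⟨fun h => ⟨hvI, h⟩, fun h => h.2⟩
      rw [this]
      exact hf d
  -- Claim 2: every pair of colour classes has a crossing edge; count them.
  have hcross : ∀ p : Fin (k+1) × Fin (k+1), p.1 ≠ p.2 →
      ∃ q : V × V, q.1 ∈ Iᶜ ∧ q.2 ∈ Iᶜ ∧ f q.1 = p.1 ∧ f q.2 = p.2 ∧ G.Adj q.1 q.2 := by
    intro p hp
    obtain ⟨v, hv, w, hw, h1, h2, h3⟩ := no_cross_merge G f hf hmin hp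
    exact ⟨(v, w), hv, hw, h1, h2, h3⟩
  set pick : Fin (k+1) × Fin (k+1) → V × V := fun p =>
    if h : p.1 ≠ p.2 then Classical.choose (hcross p h)
    else (Classical.arbitrary V, Classical.arbitrary V) with hpick
  have hpickspec : ∀ p (h : p.1 ≠ p.2), (pick p).1 ∈ Iᶜ ∧ (pick p).2 ∈ Iᶜ ∧
      f (pick p).1 = p.1 ∧ f (pick p).2 = p.2 ∧ G.Adj (pick p).1 (pick p).2 := by
    intro p h
    rw [hpick]
    simp only [dif_pos h]
    exact Classical.choose_spec (hcross p h)
  set φ : Fin (k+1) × Fin (k+1) → Sym2 V := fun p => s((pick p).1, (pick p).2) with hφ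
  set s := (Finset.univ : Finset (Fin (k+1))).offDiag with hs
  have hsub : s.image φ ⊆ Iᶜ.sym2.filter (fun e => e ∈ G.edgeSet) := by
    intro y hy
    obtain ⟨p, hp, rfl⟩ := Finset.mem_image.mp hy
    have hpne : p.1 ≠ p.2 := (Finset.mem_offDiag.mp hp).2.2
    obtain ⟨h1, h2, -, -, h5⟩ := hpickspec p hpne
    rw [hφ]
    simp only [Finset.mem_filter, Finset.mk_mem_sym2_iff, SimpleGraph.mem_edgeSet]
    exact ⟨⟨h1, h2⟩, h5⟩
  have hfib : ∀ y ∈ s.image φ, (s.filter (fun p => φ p = y)).card ≤ 2 := by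
    intro y hy
    obtain ⟨p, hp, rfl⟩ := Finset.mem_image.mp hy
    have hsubp : s.filter (fun q => φ q = φ p) ⊆ {p, p.swap} := by
      intro q hq
      obtain ⟨hqs, hqe⟩ := Finset.mem_filter.mp hq
      have hpne : p.1 ≠ p.2 := (Finset.mem_offDiag.mp hp).2.2
      have hqne : q.1 ≠ q.2 := (Finset.mem_offDiag.mp hqs).2.2
      obtain ⟨-, -, hp3, hp4, -⟩ := hpickspec p hpne
      obtain ⟨-, -, hq3, hq4, -⟩ := hpickspec q hqne
      rw [hφ] at hqe
      simp only [Sym2.eq_iff] at hqe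
      simp only [Finset.mem_insert, Finset.mem_singleton]
      rcases hqe with ⟨e1, e2⟩ | ⟨e1, e2⟩
      · left
        have : q.1 = p.1 := by rw [← hq3, ← hp3, e1]
        have h2 : q.2 = p.2 := by rw [← hq4, ← hp4, e2]
        exact Prod.ext this h2
      · right
        have : q.1 = p.2 := by rw [← hq3, ← hp4, e1]
        have h2 : q.2 = p.1 := by rw [← hq4, ← hp3, e2]
        exact Prod.ext this h2
    calc (s.filter (fun q => φ q = φ p)).card ≤ ({p, p.swap} : Finset _).card :=
        Finset.card_le_card hsubp
      _ ≤ 2 := Finset.card_insert_le _ _ |>.trans (by simp)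
  have hcount : s.card ≤ 2 * (s.image φ).card := Finset.card_le_mul_card_image _ 2 hfib
  have hscard : s.card = (k+1) * (k+1) - (k+1) := by
    rw [hs, Finset.offDiag_card]
    simp [Fintype.card_fin]
  have himg : (s.image φ).card ≤ mOn G Iᶜ := Finset.card_le_card hsub
  have hfinal : (k+1) * k ≤ 2 * mOn G Iᶜ := by
    have : (k+1) * (k+1) - (k+1) = (k+1) * k := by
      rw [Nat.mul_succ]
      omega
    omega
  have hchoose : (k+1).choose 2 ≤ mOn G Iᶜ := by
    rw [Nat.choose_two_right]
    have h2 : (k + 1) * (k + 1 - 1) = (k+1) * k := by norm_num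
    rw [h2]
    calc (k+1) * k / 2 ≤ 2 * mOn G Iᶜ / 2 := Nat.div_le_div_right hfinal
      _ = mOn G Iᶜ := Nat.mul_div_cancel_left _ (by norm_num)
  calc (DSI.chiJ G j - 1).choose 2 ≤ (k+1).choose 2 :=
      Nat.choose_le_choose 2 (by omega)
    _ ≤ mOn G Iᶜ := hchoose

end Helpers

theorem alphaJ_chromatic_bound {V : Type*} (G : SimpleGraph V) [Fintype V]
    [DecidableEq V] [DecidableRel G.Adj] (j : ℕ) (hj : 1 ≤ j) :
    DSI.alphaJ G j ≤ sSup {k | k ≤ Fintype.card V ∧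
      (DSI.sumSmallest G k : ℚ) + ((DSI.chiJ G j - 1).choose 2 : ℚ)
        - (k : ℚ) * ((j : ℚ) - 1) / 2 ≤ (DSI.esize G : ℚ)} := by
  classical
  set α := DSI.alphaJ G j with hα
  have hset : α ∈ {k | ∃ I : Finset V, DSI.JIndep G j I ∧ I.card = k} := by
    apply Nat.sSup_mem
    · exact ⟨0, ∅, fun v hv => absurd hv (Finset.notMem_empty v), rfl⟩
    · refine ⟨Fintype.card V, ?_⟩
      rintro k ⟨I, -, rfl⟩
      exact Finset.card_le_univ I
  obtain ⟨I, hI, hIcard⟩ := hset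
  have hαle : α ≤ Fintype.card V := hIcard ▸ Finset.card_le_univ I
  have F1 : DSI.sumSmallest G α ≤ ∑ v ∈ I, G.degree v := hIcard ▸ sumSmallest_le G I
  have F2 := sum_degree_eq G I
  have F2' := two_mul_mOn G I
  have F3 := esize_split G I
  have F4 : ((I ×ˢ I).filter fun p => G.Adj p.1 p.2).card ≤ α * (j - 1) := by
    rw [adjPairs_eq_sum, ← hIcard]
    calc ∑ v ∈ I, (I.filter (G.Adj v)).card ≤ ∑ _v ∈ I, (j - 1) :=
        Finset.sum_le_sum fun v hv => by have := hI v hv; omega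
      _ = I.card * (j - 1) := by rw [Finset.sum_const, smul_eq_mul]
  have F5 : (DSI.chiJ G j - 1).choose 2 ≤ DSI.mOn G Iᶜ :=
    choose_two_le_mOn_compl G j hj I hI
  apply le_csSup
  · exact ⟨Fintype.card V, fun k hk => hk.1⟩
  refine ⟨hαle, ?_⟩
  have c1 : (DSI.sumSmallest G α : ℚ) ≤ (∑ v ∈ I, G.degree v : ℕ) := by exact_mod_cast F1
  have c2 : ((∑ v ∈ I, G.degree v : ℕ) : ℚ)
      = (((I ×ˢ I).filter fun p => G.Adj p.1 p.2).card : ℚ)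
        + (((I ×ˢ Iᶜ).filter fun p => G.Adj p.1 p.2).card : ℚ) := by exact_mod_cast F2
  have c2' : ((((I ×ˢ I).filter fun p => G.Adj p.1 p.2).card : ℕ) : ℚ)
      = 2 * (DSI.mOn G I : ℚ) := by exact_mod_cast F2'
  have c3 : (DSI.esize G : ℚ) = (DSI.mOn G I : ℚ) + (DSI.mOn G Iᶜ : ℚ)
      + (((I ×ˢ Iᶜ).filter fun p => G.Adj p.1 p.2).card : ℚ) := by exact_mod_cast F3
  have c4 : ((((I ×ˢ I).filter fun p => G.Adj p.1 p.2).card : ℕ) : ℚ)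
      ≤ (α : ℚ) * ((j : ℚ) - 1) := by
    calc ((((I ×ˢ I).filter fun p => G.Adj p.1 p.2).card : ℕ) : ℚ)
        ≤ ((α * (j - 1) : ℕ) : ℚ) := by exact_mod_cast F4
      _ = (α : ℚ) * ((j : ℚ) - 1) := by
          push_cast [Nat.cast_sub hj]
          ring
  have c5 : (((DSI.chiJ G j - 1).choose 2 : ℕ) : ℚ) ≤ (DSI.mOn G Iᶜ : ℚ) := by
    exact_mod_cast F5
  linarith
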